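/- Assume additionally that 0 < μ([0,t]) < 1 for every t ∈ (0,1) (the support of μ is [0,1]). Then the posterior cdfs at the signals z' = 1 and z'' = 2 satisfy: F(w|2) = μ([0,w]) for every w ∈ [0,1], and F(w|1) < F(w|2) for every w ∈ (0,1). That is, the posterior distribution given the LOWER signal 1 strictly first-order stochastically dominates the posterior distribution given the HIGHER signal 2, which in turn equals the prior. -/

import Mathlib

open MeasureTheory Set

/-- The signal density `f(z,x)`: a right-angled triangle on `[x, x+1)`
followed by a rectangle of height `1/3` on `[x+1, x+2]`. -/
noncomputable def sigDen (z x : ℝ) : ℝ :=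
  if x ≤ z ∧ z < x + 1 then 1 - (2 / 3) * (z - x)
  else if x + 1 ≤ z ∧ z ≤ x + 2 then 1 / 3
  else 0

/-- The posterior cdf of `X` given the signal realization `Z = z`. -/
noncomputable def postCdf (μ : Measure ℝ) (w z : ℝ) : ℝ :=
  (∫ x in Icc (0 : ℝ) w, sigDen z x ∂μ) / (∫ x in Icc (0 : ℝ) 1, sigDen z x ∂μ)

lemma sigDen_two (x : ℝ) (hx : x ∈ Icc (0 : ℝ) 1) : sigDen 2 x = 1 / 3 := by
  obtain ⟨h0, h1⟩ := hx
  unfold sigDen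
  split_ifs with ha hb
  · linarith [ha.2]
  · rfl
  · exact absurd ⟨by linarith, by linarith⟩ hb

lemma sigDen_one (x : ℝ) (hx : x ∈ Icc (0 : ℝ) 1) : sigDen 1 x = 1 / 3 + 2 / 3 * x := by
  obtain ⟨h0, h1⟩ := hx
  unfold sigDen
  split_ifs with ha hb
  · ring
  · push_neg at ha
    have : x = 0 := by linarith [ha h1]
    rw [this]; ring
  · push_neg at ha
    exact absurd ⟨ha h1, by linarith⟩ hb

set_option maxHeartbeats 1000000 in
theorem stmt_0 (μ : Measure ℝ) [IsProbabilityMeasure μ]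
    (hμ : μ (Icc (0 : ℝ) 1) = 1)
    (hsupp : ∀ t ∈ Ioo (0 : ℝ) 1, 0 < μ (Icc 0 t) ∧ μ (Icc 0 t) < 1) :
    (∀ w ∈ Icc (0 : ℝ) 1, postCdf μ w 2 = (μ (Icc 0 w)).toReal) ∧
    (∀ w ∈ Ioo (0 : ℝ) 1, postCdf μ w 1 < postCdf μ w 2) := by
  set g : ℝ → ℝ := fun x => 1 / 3 + 2 / 3 * x with hg_def
  have hg_cont : Continuous g := by fun_prop
  -- integral of sigDen 2 over Icc 0 w for w ≤ 1
  have int2 : ∀ w ∈ Icc (0 : ℝ) 1,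
      (∫ x in Icc (0 : ℝ) w, sigDen 2 x ∂μ) = (μ (Icc 0 w)).toReal * (1 / 3) := by
    intro w hw
    rw [setIntegral_congr_fun measurableSet_Icc
      (fun x hx => sigDen_two x ⟨hx.1, hx.2.trans hw.2⟩)]
    simp [Measure.restrict_apply, mul_comm]
    rfl
  have part1 : ∀ w ∈ Icc (0 : ℝ) 1, postCdf μ w 2 = (μ (Icc 0 w)).toReal := by
    intro w hw
    have h1 := int2 w hw
    have h2 := int2 1 (by norm_num)
    rw [postCdf, h1, h2, hμ]
    norm_num
  refine ⟨part1, ?_⟩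
  intro w hw
  obtain ⟨hw0, hw1⟩ := hw
  rw [part1 w ⟨le_of_lt hw0, le_of_lt hw1⟩]
  set w' : ℝ := (w + 1) / 2 with hw'_def
  have hww' : w < w' := by rw [hw'_def]; linarith
  have hw'1 : w' < 1 := by rw [hw'_def]; linarith
  have hw'0 : 0 < w' := by linarith
  -- rewrite the integrals of sigDen 1 as integrals of g
  have congr1 : ∀ s : Set ℝ, MeasurableSet s → s ⊆ Icc (0 : ℝ) 1 →
      (∫ x in s, sigDen 1 x ∂μ) = ∫ x in s, g x ∂μ := fun s hs hsub =>
    setIntegral_congr_fun hs (fun x hx => sigDen_one x (hsub hx))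
  have hIntg : IntegrableOn g (Icc (0 : ℝ) 1) μ := hg_cont.integrableOn_Icc
  have hIntA : IntegrableOn g (Icc (0 : ℝ) w) μ :=
    hIntg.mono_set (Icc_subset_Icc le_rfl (le_of_lt hw1))
  have hIntB1 : IntegrableOn g (Ioc w w') μ :=
    hIntg.mono_set (fun x hx => ⟨le_trans (le_of_lt hw0) (le_of_lt hx.1), hx.2.trans (le_of_lt hw'1)⟩)
  have hIntB2 : IntegrableOn g (Ioc w' 1) μ :=
    hIntg.mono_set (fun x hx => ⟨le_trans (le_of_lt hw'0) (le_of_lt hx.1), hx.2⟩)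
  -- split [0,1] = [0,w] ∪ (w,w'] ∪ (w',1]
  have hsplit1 : Icc (0 : ℝ) w' = Icc 0 w ∪ Ioc w w' :=
    (Icc_union_Ioc_eq_Icc (le_of_lt hw0) (le_of_lt hww')).symm
  have hsplit2 : Icc (0 : ℝ) 1 = Icc 0 w' ∪ Ioc w' 1 :=
    (Icc_union_Ioc_eq_Icc (le_of_lt hw'0) (le_of_lt hw'1)).symm
  set a : ℝ := (μ (Icc 0 w)).toReal with ha_def
  set b1 : ℝ := (μ (Ioc w w')).toReal with hb1_def
  set b2 : ℝ := (μ (Ioc w' 1)).toReal with hb2_def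
  have hd1 : Disjoint (Icc (0 : ℝ) w) (Ioc w w') := by
    rw [Set.disjoint_left]; rintro x hx ⟨h1, _⟩; exact absurd hx.2 (not_le.2 h1)
  have hd2 : Disjoint (Icc (0 : ℝ) w') (Ioc w' 1) := by
    rw [Set.disjoint_left]; rintro x hx ⟨h1, _⟩; exact absurd hx.2 (not_le.2 h1)
  have hμsum : a + b1 + b2 = 1 := by
    have e2 : μ (Icc (0:ℝ) 1) = μ (Icc 0 w') + μ (Ioc w' 1) := by
      rw [hsplit2, measure_union hd2 measurableSet_Ioc]
    have e1 : μ (Icc (0:ℝ) w') = μ (Icc 0 w) + μ (Ioc w w') := by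
      rw [hsplit1, measure_union hd1 measurableSet_Ioc]
    have : μ (Icc 0 w) + μ (Ioc w w') + μ (Ioc w' 1) = 1 := by
      rw [← e1, ← e2, hμ]
    have := congrArg ENNReal.toReal this
    rwa [ENNReal.toReal_add (by finiteness) (by finiteness),
      ENNReal.toReal_add (by finiteness) (by finiteness), ENNReal.toReal_one] at this
  have ha_pos : 0 < a := ENNReal.toReal_pos (hsupp w ⟨hw0, hw1⟩).1.ne' (by finiteness)
  have hb1_nonneg : 0 ≤ b1 := ENNReal.toReal_nonneg
  have hb2_pos : 0 < b2 := by
    have hlt : μ (Icc (0:ℝ) w') < 1 := (hsupp w' ⟨hw'0, hw'1⟩).2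
    have e2 : μ (Icc (0:ℝ) 1) = μ (Icc 0 w') + μ (Ioc w' 1) := by
      rw [hsplit2, measure_union hd2 measurableSet_Ioc]
    have hne : μ (Ioc w' 1) ≠ 0 := by
      intro h0
      rw [h0, add_zero, hμ] at e2
      exact absurd e2.symm hlt.ne
    exact ENNReal.toReal_pos hne (by finiteness)
  -- the three integrals
  set IA : ℝ := ∫ x in Icc (0 : ℝ) w, g x ∂μ with hIA
  set IB1 : ℝ := ∫ x in Ioc w w', g x ∂μ with hIB1
  set IB2 : ℝ := ∫ x in Ioc w' 1, g x ∂μ with hIB2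
  have hD : (∫ x in Icc (0 : ℝ) 1, g x ∂μ) = IA + IB1 + IB2 := by
    rw [hsplit2, setIntegral_union hd2 measurableSet_Ioc hg_cont.integrableOn_Icc hIntB2,
      hsplit1, setIntegral_union hd1 measurableSet_Ioc hIntA hIntB1]
  -- bounds
  have hIA_le : IA ≤ (1 / 3 + 2 / 3 * w) * a := by
    have : IA ≤ ∫ _x in Icc (0 : ℝ) w, (1 / 3 + 2 / 3 * w) ∂μ := by
      refine setIntegral_mono_on hIntA integrableOn_const measurableSet_Icc ?_
      intro x hx
      simp only [hg_def]
      linarith [hx.2]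
    simp [mul_comm] at this ⊢
    exact this
  have hIB1_ge : (1 / 3 + 2 / 3 * w) * b1 ≤ IB1 := by
    have : (∫ _x in Ioc w w', (1 / 3 + 2 / 3 * w) ∂μ) ≤ IB1 := by
      refine setIntegral_mono_on integrableOn_const hIntB1 measurableSet_Ioc ?_
      intro x hx
      simp only [hg_def]
      linarith [hx.1]
    simp [mul_comm] at this ⊢
    exact this
  have hIB2_ge : (1 / 3 + 2 / 3 * w') * b2 ≤ IB2 := by
    have : (∫ _x in Ioc w' 1, (1 / 3 + 2 / 3 * w') ∂μ) ≤ IB2 := by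
      refine setIntegral_mono_on integrableOn_const hIntB2 measurableSet_Ioc ?_
      intro x hx
      simp only [hg_def]
      linarith [hx.1]
    simp [mul_comm] at this ⊢
    exact this
  have hIA_nonneg : 0 ≤ IA := by
    refine setIntegral_nonneg measurableSet_Icc (fun x hx => ?_)
    simp only [hg_def]
    linarith [hx.1]
  have hDpos : 0 < IA + IB1 + IB2 := by
    have h1 : (0:ℝ) < (1 / 3 + 2 / 3 * w') * b2 := mul_pos (by linarith) hb2_pos
    have h2 : (0:ℝ) ≤ (1 / 3 + 2 / 3 * w) * b1 := mul_nonneg (by linarith) hb1_nonneg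
    linarith [hIB1_ge, hIB2_ge]
  rw [postCdf, congr1 _ measurableSet_Icc (Icc_subset_Icc le_rfl (le_of_lt hw1)),
    congr1 _ measurableSet_Icc subset_rfl, hD, ← hIA]
  rw [div_lt_iff₀ hDpos]
  have h1 : (1 - a) * IA ≤ (1 - a) * ((1 / 3 + 2 / 3 * w) * a) :=
    mul_le_mul_of_nonneg_left hIA_le (by linarith)
  have h2 : a * ((1 / 3 + 2 / 3 * w) * b1) ≤ a * IB1 :=
    mul_le_mul_of_nonneg_left hIB1_ge ha_pos.le
  have h3 : a * ((1 / 3 + 2 / 3 * w') * b2) ≤ a * IB2 :=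
    mul_le_mul_of_nonneg_left hIB2_ge ha_pos.le
  have h4 : a * ((1 / 3 + 2 / 3 * w) * b2) < a * ((1 / 3 + 2 / 3 * w') * b2) := by
    apply mul_lt_mul_of_pos_left _ ha_pos
    apply mul_lt_mul_of_pos_right _ hb2_pos
    linarith
  have h5 : (1 - a) * ((1 / 3 + 2 / 3 * w) * a)
      = a * ((1 / 3 + 2 / 3 * w) * b1) + a * ((1 / 3 + 2 / 3 * w) * b2) := by
    have hb : (1:ℝ) - a = b1 + b2 := by linarith
    rw [hb]; ring
  have h6 : a * (IA + IB1 + IB2) = a * IA + a * IB1 + a * IB2 := by ring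
  linarith
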